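/- Let μ be a finite Borel measure on (∂U,δ) and g a doubling gauge function (right-continuous, non-decreasing on (0,r₀), lim₀ g = 0, g(2r) ≤ Cg(r)). Suppose (i) for μ-almost all u, limsup_{r→0} μ(B(u,r))/g(r) = κ for some constant κ ∈ (0,∞), and (ii) there is κ₀ ∈ (0,κ) with H_g({u ∈ ∂U : limsup_{r→0} μ(B(u,r))/g(r) ≤ κ₀}) = 0. Then H_g(· ∩ supp μ) = κ⁻¹ μ as measures. -/

import Mathlib

open Filter Set

/-- The boundary ∂U: infinite sequences of positive integers. -/
abbrev pU := ℕ → ℕ+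

-- δ(u,v) = exp(-|u∧v|), where |u∧v| is the length of the longest common
-- prefix of u and v; δ(u,u) = 0.
open Classical in
noncomputable def delta (u v : pU) : ℝ :=
  if h : u = v then 0 else Real.exp (-(Nat.find (Function.ne_iff.mp h) : ℝ))

/-- Open ball in (∂U, δ). -/
def dball (u : pU) (r : ℝ) : Set pU := {v | delta u v < r}

open ENNReal MeasureTheory in
instance : MeasurableSpace ℕ+ := ⊤

/-- Diameter of a subset of ∂U for the metric δ, valued in [0,∞]. -/
noncomputable def ediam (A : Set pU) : ENNReal :=
  ⨆ u ∈ A, ⨆ v ∈ A, ENNReal.ofReal (delta u v)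

/-- g(diam S), with the convention that sets of null diameter contribute 0. -/
noncomputable def gaugeOf (g : ℝ → ℝ) (S : Set pU) : ENNReal :=
  if ediam S = 0 then 0 else ENNReal.ofReal (g (ediam S).toReal)

/-- Pre-measure: infimum of Σ g(diam Cₙ) over countable covers by sets of
diameter at most ε. -/
noncomputable def Hpre (g : ℝ → ℝ) (ε : ℝ) (A : Set pU) : ENNReal :=
  ⨅ (C : ℕ → Set pU) (_ : A ⊆ ⋃ n, C n)
    (_ : ∀ n, ediam (C n) ≤ ENNReal.ofReal ε), ∑' n, gaugeOf g (C n)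

/-- The g-Hausdorff measure H_g on (∂U, δ). -/
noncomputable def Hmeas (g : ℝ → ℝ) (A : Set pU) : ENNReal :=
  ⨆ (ε : ℝ) (_ : 0 < ε), Hpre g ε A

open MeasureTheory in
/-- The topological support of a measure on (∂U, δ). -/
def msupport (μ : Measure pU) : Set pU := {u | ∀ r : ℝ, 0 < r → 0 < μ (dball u r)}

open Filter Set MeasureTheory

/-- `u` and `v` agree on the first `n` coordinates. -/
def agrees (u v : pU) (n : ℕ) : Prop := ∀ i < n, u i = v i

lemma delta_nonneg (u v : pU) : 0 ≤ delta u v := by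
  unfold delta; split
  · exact le_refl 0
  · exact (Real.exp_pos _).le

lemma delta_self (u : pU) : delta u u = 0 := by simp [delta]

lemma delta_eq_zero_iff {u v : pU} : delta u v = 0 ↔ u = v := by
  constructor
  · intro h
    by_contra hne
    rw [delta, dif_neg hne] at h
    exact (Real.exp_pos _).ne' h
  · rintro rfl; exact delta_self u

lemma delta_le_exp_iff {u v : pU} {n : ℕ} :
    delta u v ≤ Real.exp (-(n : ℝ)) ↔ agrees u v n := by
  by_cases h : u = v
  · subst h
    simp [delta_self, (Real.exp_pos _).le, agrees]
  · rw [delta, dif_neg h, Real.exp_le_exp, neg_le_neg_iff, Nat.cast_le]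
    rw [Nat.le_find_iff]
    constructor
    · intro H i hi
      have := H i hi
      push_neg at this; exact this
    · intro H i hi
      simpa using H i hi
/-- Cylinder with address `a`. -/
def cylL (a : List ℕ+) : Set pU := {v | ∀ i < a.length, v i = a.getD i 1}

/-- The address of the length-`n` prefix of `u`. -/
def pre (u : pU) (n : ℕ) : List ℕ+ := (List.range n).map u

@[simp] lemma pre_length (u : pU) (n : ℕ) : (pre u n).length = n := by
  simp [pre]

lemma pre_getD (u : pU) {n i : ℕ} (hi : i < n) : (pre u n).getD i 1 = u i := by
  have hi' : i < (pre u n).length := by simpa using hi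
  rw [List.getD_eq_getElem _ _ hi']
  simp [pre]

lemma mem_cylL_pre {u v : pU} {n : ℕ} : v ∈ cylL (pre u n) ↔ agrees u v n := by
  constructor
  · intro h i hi
    have := h i (by simpa using hi)
    rw [pre_getD u hi] at this
    exact this.symm
  · intro h i hi
    rw [pre_length] at hi
    rw [pre_getD u hi]
    exact (h i hi).symm

lemma self_mem_cylL_pre (u : pU) (n : ℕ) : u ∈ cylL (pre u n) :=
  mem_cylL_pre.mpr (fun _ _ => rfl)

lemma pre_eq_of_mem {a : List ℕ+} {v : pU} (hv : v ∈ cylL a) : pre v a.length = a := by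
  apply List.ext_getElem (by simp)
  intro i hi hia
  have := hv i (by simpa using hia)
  rw [List.getD_eq_getElem _ _ hia] at this
  simpa [pre] using this

lemma cylL_measurable (a : List ℕ+) : MeasurableSet (cylL a) := by
  have : cylL a = ⋂ i ∈ Set.Iio a.length, (fun v : pU => v i) ⁻¹' {a.getD i 1} := by
    ext v; simp [cylL, Set.mem_iInter]
  rw [this]
  exact MeasurableSet.biInter (Set.to_countable _)
    (fun i _ => measurable_pi_apply i (MeasurableSet.of_compl trivial))

lemma pre_prefix (u : pU) {m n : ℕ} (h : m ≤ n) : pre u m <+: pre u n := by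
  have : pre u m = (pre u n).take m := by
    rw [pre, pre, ← List.map_take, List.take_range, min_eq_left h]
  rw [this]
  exact List.take_prefix _ _

lemma cylL_mono {a b : List ℕ+} (h : a <+: b) : cylL b ⊆ cylL a := by
  intro v hv i hi
  have hlen : a.length ≤ b.length := h.length_le
  have hib : i < b.length := lt_of_lt_of_le hi hlen
  have h1 := hv i hib
  rw [List.getD_eq_getElem _ _ hib] at h1
  rw [List.getD_eq_getElem _ _ hi, List.IsPrefix.getElem h hi]
  exact h1

/-- If two cylinders intersect, the one with shorter address contains the other. -/
lemma cylL_nested {a b : List ℕ+} {x : pU} (hxa : x ∈ cylL a) (hxb : x ∈ cylL b)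
    (hlen : a.length ≤ b.length) : a <+: b := by
  rw [← pre_eq_of_mem hxa, ← pre_eq_of_mem hxb]
  exact pre_prefix x hlen
lemma ofReal_delta_le_ediam {S : Set pU} {u v : pU} (hu : u ∈ S) (hv : v ∈ S) :
    ENNReal.ofReal (delta u v) ≤ ediam S := by
  unfold ediam
  exact le_trans (le_refl _) (le_trans (le_iSup₂ (f := fun (w : pU) (_ : w ∈ S) =>
    ENNReal.ofReal (delta u w)) v hv) (le_iSup₂ (f := fun (w : pU) (_ : w ∈ S) =>
    ⨆ x ∈ S, ENNReal.ofReal (delta w x)) u hu))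

lemma ediam_le_iff {S : Set pU} {d : ENNReal} :
    ediam S ≤ d ↔ ∀ u ∈ S, ∀ v ∈ S, ENNReal.ofReal (delta u v) ≤ d := by
  unfold ediam
  simp [iSup₂_le_iff]

lemma delta_le_of_ediam_le {S : Set pU} {u v : pU} {d : ℝ} (hd : 0 ≤ d)
    (hu : u ∈ S) (hv : v ∈ S) (h : ediam S ≤ ENNReal.ofReal d) : delta u v ≤ d := by
  have := le_trans (ofReal_delta_le_ediam hu hv) h
  exact (ENNReal.ofReal_le_ofReal_iff hd).mp this

@[simp] lemma ediam_empty : ediam (∅ : Set pU) = 0 := by simp [ediam]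

lemma subsingleton_of_ediam_eq_zero {S : Set pU} (h : ediam S = 0) {u v : pU}
    (hu : u ∈ S) (hv : v ∈ S) : u = v := by
  have := delta_le_of_ediam_le le_rfl hu hv (by simp [h])
  exact delta_eq_zero_iff.mp (le_antisymm this (delta_nonneg u v))

lemma delta_eq_exp {u v : pU} {n : ℕ} (hagree : agrees u v n) (hne : u n ≠ v n) :
    delta u v = Real.exp (-(n : ℝ)) := by
  have huv : u ≠ v := fun h => hne (congrFun h n)
  rw [delta, dif_neg huv]
  have hfind : Nat.find (Function.ne_iff.mp huv) = n := by
    rw [Nat.find_eq_iff]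
    exact ⟨hne, fun m hm => by simpa using hagree m hm⟩
  rw [hfind]

lemma ediam_cylL_pre (u : pU) (n : ℕ) :
    ediam (cylL (pre u n)) = ENNReal.ofReal (Real.exp (-(n : ℝ))) := by
  apply le_antisymm
  · rw [ediam_le_iff]
    intro v hv w hw
    apply ENNReal.ofReal_le_ofReal
    rw [delta_le_exp_iff]
    intro i hi
    rw [← (mem_cylL_pre.mp hv i hi)]
    exact mem_cylL_pre.mp hw i hi
  · set w : pU := fun i => if i = n then u n + 1 else u i with hw
    have hwmem : w ∈ cylL (pre u n) := by
      rw [mem_cylL_pre]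
      intro i hi
      simp only [hw, if_neg (show ¬ i = n by omega)]
    have hd : delta u w = Real.exp (-(n : ℝ)) := by
      apply delta_eq_exp
      · intro i hi
        simp only [hw, if_neg (show ¬ i = n by omega)]
      · simp only [hw, if_pos rfl]
        exact ne_of_lt (PNat.lt_add_right _ _)
    rw [← hd]
    exact ofReal_delta_le_ediam (self_mem_cylL_pre u n) hwmem

lemma ediam_cylL_pre_ne (u : pU) (n : ℕ) : ediam (cylL (pre u n)) ≠ 0 := by
  rw [ediam_cylL_pre]
  simp [Real.exp_pos]

lemma gaugeOf_cylL_pre (g : ℝ → ℝ) (u : pU) (n : ℕ) :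
    gaugeOf g (cylL (pre u n)) = ENNReal.ofReal (g (Real.exp (-(n : ℝ)))) := by
  rw [gaugeOf, if_neg (ediam_cylL_pre_ne u n), ediam_cylL_pre,
    ENNReal.toReal_ofReal (Real.exp_pos _).le]

/-- Every positive radius ball is a cylinder `cylL (pre u n)` with `exp (-n) < r`. -/
lemma ball_eq_cyl (u : pU) {r : ℝ} (hr : 0 < r) :
    ∃ n : ℕ, Real.exp (-(n : ℝ)) < r ∧ dball u r = cylL (pre u n) := by
  have hex : ∃ n : ℕ, Real.exp (-(n : ℝ)) < r := by
    obtain ⟨n, hn⟩ := exists_nat_gt (max 0 (-Real.log r))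
    refine ⟨n, ?_⟩
    have h1 : -(n : ℝ) < Real.log r := by
      have := (max_lt_iff.mp hn).2
      linarith
    calc Real.exp (-(n:ℝ)) < Real.exp (Real.log r) := Real.exp_lt_exp.mpr h1
    _ = r := Real.exp_log hr
  classical
  refine ⟨Nat.find hex, Nat.find_spec hex, ?_⟩
  ext v
  simp only [dball, Set.mem_setOf_eq]
  rw [mem_cylL_pre]
  constructor
  · intro hlt
    by_cases huv : u = v
    · subst huv; exact fun _ _ => rfl
    · have : delta u v = Real.exp (-(Nat.find (Function.ne_iff.mp huv) : ℝ)) := by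
        rw [delta, dif_neg huv]
      rw [this] at hlt
      have hle : Nat.find hex ≤ Nat.find (Function.ne_iff.mp huv) := Nat.find_min' hex hlt
      intro i hi
      have hmin : ¬ (u i ≠ v i) :=
        Nat.find_min (Function.ne_iff.mp huv) (lt_of_lt_of_le hi hle)
      push_neg at hmin
      exact hmin
  · intro h
    calc delta u v ≤ Real.exp (-(Nat.find hex : ℝ)) := delta_le_exp_iff.mpr h
    _ < r := Nat.find_spec hex
@[simp] lemma gaugeOf_empty (g : ℝ → ℝ) : gaugeOf g (∅ : Set pU) = 0 := by
  simp [gaugeOf]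

lemma Hpre_le_cover (g : ℝ → ℝ) (ε : ℝ) {A : Set pU} {C : ℕ → Set pU}
    (hcov : A ⊆ ⋃ n, C n) (hdiam : ∀ n, ediam (C n) ≤ ENNReal.ofReal ε) :
    Hpre g ε A ≤ ∑' n, gaugeOf g (C n) := by
  exact iInf_le_of_le C (iInf_le_of_le hcov (iInf_le_of_le hdiam le_rfl))

lemma Hpre_mono_set (g : ℝ → ℝ) (ε : ℝ) {A B : Set pU} (h : A ⊆ B) :
    Hpre g ε A ≤ Hpre g ε B := by
  refine le_iInf fun C => le_iInf fun hcov => le_iInf fun hdiam => ?_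
  exact Hpre_le_cover g ε (h.trans hcov) hdiam

lemma Hpre_anti (g : ℝ → ℝ) {ε ε' : ℝ} (h : ε' ≤ ε) (A : Set pU) :
    Hpre g ε A ≤ Hpre g ε' A := by
  refine le_iInf fun C => le_iInf fun hcov => le_iInf fun hdiam => ?_
  exact Hpre_le_cover g ε hcov
    (fun n => (hdiam n).trans (ENNReal.ofReal_le_ofReal h))

lemma Hpre_le_Hmeas (g : ℝ → ℝ) {ε : ℝ} (hε : 0 < ε) (A : Set pU) :
    Hpre g ε A ≤ Hmeas g A :=
  le_iSup₂ (f := fun (ε : ℝ) (_ : 0 < ε) => Hpre g ε A) ε hε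

lemma Hmeas_mono (g : ℝ → ℝ) {A B : Set pU} (h : A ⊆ B) : Hmeas g A ≤ Hmeas g B :=
  iSup₂_mono fun ε _ => Hpre_mono_set g ε h

lemma Hpre_union_le (g : ℝ → ℝ) (ε : ℝ) (A B : Set pU) :
    Hpre g ε (A ∪ B) ≤ Hpre g ε A + Hpre g ε B := by
  by_cases hA : Hpre g ε A = ⊤
  · simp [hA]
  by_cases hB : Hpre g ε B = ⊤
  · simp [hB]
  refine ENNReal.le_of_forall_pos_le_add fun δ hδ hfin => ?_
  have hδ2 : (0:ENNReal) < ENNReal.ofReal (δ/2) := by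
    simp [ENNReal.ofReal_pos]; positivity
  have hA' : Hpre g ε A < Hpre g ε A + ENNReal.ofReal (δ/2) :=
    ENNReal.lt_add_right hA hδ2.ne'
  have hB' : Hpre g ε B < Hpre g ε B + ENNReal.ofReal (δ/2) :=
    ENNReal.lt_add_right hB hδ2.ne'
  rw [Hpre, iInf_lt_iff] at hA' hB'
  obtain ⟨CA, hCA⟩ := hA'
  rw [iInf_lt_iff] at hCA
  obtain ⟨hcovA, hCA⟩ := hCA
  rw [iInf_lt_iff] at hCA
  obtain ⟨hdiamA, hCA⟩ := hCA
  obtain ⟨CB, hCB⟩ := hB'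
  rw [iInf_lt_iff] at hCB
  obtain ⟨hcovB, hCB⟩ := hCB
  rw [iInf_lt_iff] at hCB
  obtain ⟨hdiamB, hCB⟩ := hCB
  set D : ℕ → Set pU := fun k => if Even k then CA (k / 2) else CB (k / 2) with hD
  have hcov : A ∪ B ⊆ ⋃ k, D k := by
    rintro x (hx | hx)
    · obtain ⟨s, ⟨n, rfl⟩, hs⟩ := hcovA hx
      exact Set.mem_iUnion.mpr ⟨2 * n, by simp [hD, Nat.mul_div_cancel_left n two_pos, hs]⟩
    · obtain ⟨s, ⟨n, rfl⟩, hs⟩ := hcovB hx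
      refine Set.mem_iUnion.mpr ⟨2 * n + 1, ?_⟩
      have : ¬ Even (2*n+1) := by simp [Nat.even_add_one, Nat.even_mul]
      simp [hD, this, Nat.mul_add_div two_pos, hs]
  have hdiam : ∀ k, ediam (D k) ≤ ENNReal.ofReal ε := by
    intro k
    by_cases h : Even k <;> simp [hD, h, hdiamA _, hdiamB _]
  calc Hpre g ε (A ∪ B) ≤ ∑' k, gaugeOf g (D k) := Hpre_le_cover g ε hcov hdiam
  _ = ∑' n, gaugeOf g (D (2*n)) + ∑' n, gaugeOf g (D (2*n+1)) := by
      rw [← tsum_even_add_odd ENNReal.summable ENNReal.summable]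
  _ = ∑' n, gaugeOf g (CA n) + ∑' n, gaugeOf g (CB n) := by
      congr 1
      · refine tsum_congr fun n => ?_
        simp [hD, Nat.mul_div_cancel_left n two_pos]
      · refine tsum_congr fun n => ?_
        have : ¬ Even (2*n+1) := by simp [Nat.even_add_one, Nat.even_mul]
        simp [hD, this, Nat.mul_add_div two_pos]
  _ ≤ (Hpre g ε A + ENNReal.ofReal (δ/2)) + (Hpre g ε B + ENNReal.ofReal (δ/2)) :=
      add_le_add hCA.le hCB.le
  _ = Hpre g ε A + Hpre g ε B + (ENNReal.ofReal (δ/2) + ENNReal.ofReal (δ/2)) := by ring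
  _ ≤ Hpre g ε A + Hpre g ε B + δ := by
      gcongr
      rw [← ENNReal.ofReal_add (by positivity) (by positivity)]
      rw [add_halves]
      exact ENNReal.ofReal_coe_nnreal.le

lemma Hmeas_union_le (g : ℝ → ℝ) (A B : Set pU) :
    Hmeas g (A ∪ B) ≤ Hmeas g A + Hmeas g B := by
  refine iSup₂_le fun ε hε => ?_
  exact (Hpre_union_le g ε A B).trans
    (add_le_add (Hpre_le_Hmeas g hε A) (Hpre_le_Hmeas g hε B))
/-- Upper bound: if the upper density exceeds `t` on `F`, then
`H_g F ≤ t⁻¹ μ V` for any "open" `V ⊇ F`. -/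
lemma Hmeas_le_of_density_gt (g : ℝ → ℝ) (r0 : ℝ) (hr0 : 0 < r0)
    (hg_pos : ∀ r ∈ Set.Ioo 0 r0, 0 < g r)
    (hg_mono : MonotoneOn g (Set.Ioo 0 r0))
    (μ : Measure pU) (t : ℝ) (ht : 0 < t) (F V : Set pU) (hFV : F ⊆ V)
    (hV : ∀ u ∈ V, ∃ n : ℕ, cylL (pre u n) ⊆ V)
    (hden : ∀ u ∈ F, ENNReal.ofReal t <
      Filter.limsup (fun r : ℝ => μ (dball u r) / ENNReal.ofReal (g r))
        (nhdsWithin 0 (Set.Ioi 0))) :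
    Hmeas g F ≤ (ENNReal.ofReal t)⁻¹ * μ V := by
  refine iSup₂_le fun ε hε => ?_
  set ε₁ : ℝ := min ε (min r0 1) / 2 with hε₁def
  have hε₁pos : 0 < ε₁ := by positivity
  have hε₁ε : ε₁ ≤ ε := by
    have : min ε (min r0 1) ≤ ε := min_le_left _ _
    simp only [hε₁def]; linarith
  have hε₁r0 : ε₁ < r0 := by
    have h1 : min ε (min r0 1) ≤ r0 := (min_le_right _ _).trans (min_le_left _ _)
    simp only [hε₁def]; linarith
  refine le_trans (Hpre_anti g hε₁ε F) ?_
  -- the good-cylinder property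
  set Q : List ℕ+ → Prop := fun a => cylL a ⊆ V ∧ ediam (cylL a) ≤ ENNReal.ofReal ε₁ ∧
    ENNReal.ofReal t * gaugeOf g (cylL a) ≤ μ (cylL a) with hQ
  have hchoice : ∀ u ∈ F, ∃ a : List ℕ+, u ∈ cylL a ∧ Q a := by
    intro u hu
    obtain ⟨n₀, hn₀⟩ := hV u (hFV hu)
    have hfreq := Filter.frequently_lt_of_lt_limsup (by isBoundedDefault) (hden u hu)
    set c : ℝ := min ε₁ (Real.exp (-(n₀ : ℝ))) with hc
    have hcpos : 0 < c := lt_min hε₁pos (Real.exp_pos _)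
    obtain ⟨r, hrmem, hrP⟩ := Filter.frequently_iff.mp hfreq
      (Ioo_mem_nhdsGT_of_mem ⟨le_rfl, hcpos⟩)
    have hr0' : 0 < r := hrmem.1
    have hrc : r < c := hrmem.2
    have hrr0 : r < r0 := lt_of_lt_of_le (hrc.trans_le (min_le_left _ _)) hε₁r0.le
    obtain ⟨n, hexp, hball⟩ := ball_eq_cyl u hr0'
    refine ⟨pre u n, ?_, ?_, ?_, ?_⟩
    · exact self_mem_cylL_pre u n
    · rw [← hball]
      intro v hv
      apply hn₀
      rw [mem_cylL_pre, ← delta_le_exp_iff]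
      have : delta u v < Real.exp (-(n₀:ℝ)) :=
        lt_of_lt_of_le (lt_of_lt_of_le hv hrc.le) (min_le_right _ _)
      exact this.le
    · rw [ediam_cylL_pre]
      exact ENNReal.ofReal_le_ofReal
        (le_of_lt (lt_of_lt_of_le (hexp.trans hrc) (min_le_left _ _)))
    · have hgr : 0 < g r := hg_pos r ⟨hr0', hrr0⟩
      have hne : ENNReal.ofReal (g r) ≠ 0 := by simp [ENNReal.ofReal_pos.mpr hgr, ne_of_gt]
      have hnt : ENNReal.ofReal (g r) ≠ ⊤ := ENNReal.ofReal_ne_top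
      have hmul : ENNReal.ofReal t * ENNReal.ofReal (g r) ≤ μ (dball u r) := by
        have := (ENNReal.lt_div_iff_mul_lt (Or.inl hne) (Or.inl hnt)).mp hrP
        exact this.le
      rw [gaugeOf_cylL_pre, ← hball]
      refine le_trans ?_ hmul
      apply mul_le_mul_right
      apply ENNReal.ofReal_le_ofReal
      exact hg_mono ⟨Real.exp_pos _, hexp.trans hrr0⟩ ⟨hr0', hrr0⟩ hexp.le
  classical
  set S : Set (List ℕ+) := {a | Q a ∧ ∃ u ∈ F, u ∈ cylL a} with hS
  set Smax : Set (List ℕ+) := {a ∈ S | ∀ b ∈ S, b <+: a → b = a} with hSmax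
  have hmaxex : ∀ N : ℕ, ∀ a ∈ S, a.length ≤ N → ∃ b ∈ Smax, b <+: a := by
    intro N
    induction N with
    | zero =>
      intro a ha hlen
      refine ⟨a, ⟨ha, fun b hb hba => ?_⟩, List.prefix_refl a⟩
      have := hba.length_le
      exact List.IsPrefix.eq_of_length hba (by omega)
    | succ N ih =>
      intro a ha hlen
      by_cases hmax : ∀ b ∈ S, b <+: a → b = a
      · exact ⟨a, ⟨ha, hmax⟩, List.prefix_refl a⟩
      · push_neg at hmax
        obtain ⟨b, hbS, hba, hbne⟩ := hmax
        have hblen : b.length < a.length := by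
          rcases lt_or_eq_of_le hba.length_le with h | h
          · exact h
          · exact absurd (List.IsPrefix.eq_of_length hba h) hbne
        obtain ⟨c, hc, hcb⟩ := ih b hbS (by omega)
        exact ⟨c, hc, hcb.trans hba⟩
  have hdisj : Smax.PairwiseDisjoint cylL := by
    intro a ha b hb hab
    rw [Function.onFun, Set.disjoint_left]
    intro x hxa hxb
    rcases le_total a.length b.length with h | h
    · exact hab (hb.2 a ha.1 (cylL_nested hxa hxb h))
    · exact hab ((ha.2 b hb.1 (cylL_nested hxb hxa h)).symm)
  set e : ℕ ≃ List ℕ+ := (Denumerable.eqv (List ℕ+)).symm with he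
  set Cc : ℕ → Set pU := fun k => if e k ∈ Smax then cylL (e k) else ∅ with hCc
  have hcov : F ⊆ ⋃ k, Cc k := by
    intro u hu
    obtain ⟨a, hua, hQa⟩ := hchoice u hu
    have haS : a ∈ S := ⟨hQa, u, hu, hua⟩
    obtain ⟨b, hbmax, hba⟩ := hmaxex a.length a haS le_rfl
    refine Set.mem_iUnion.mpr ⟨e.symm b, ?_⟩
    simp only [hCc, Equiv.apply_symm_apply, if_pos hbmax]
    exact cylL_mono hba hua
  have hdiam : ∀ k, ediam (Cc k) ≤ ENNReal.ofReal ε₁ := by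
    intro k
    by_cases h : e k ∈ Smax
    · simpa [hCc, h] using h.1.1.2.1
    · simp [hCc, h]
  have hsum : ∑' k, gaugeOf g (Cc k) = ∑' a : Smax, gaugeOf g (cylL a) := by
    have h1 : ∀ k, gaugeOf g (Cc k) =
        Set.indicator Smax (fun a => gaugeOf g (cylL a)) (e k) := by
      intro k
      by_cases h : e k ∈ Smax <;> simp [hCc, h]
    calc ∑' k, gaugeOf g (Cc k)
        = ∑' k, Set.indicator Smax (fun a => gaugeOf g (cylL a)) (e k) := tsum_congr h1
      _ = ∑' a, Set.indicator Smax (fun a => gaugeOf g (cylL a)) a := e.tsum_eq _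
      _ = ∑' a : Smax, gaugeOf g (cylL a) := (tsum_subtype _ _).symm
  have hkey : ENNReal.ofReal t * ∑' a : Smax, gaugeOf g (cylL a) ≤ μ V := by
    rw [← ENNReal.tsum_mul_left]
    calc ∑' a : Smax, ENNReal.ofReal t * gaugeOf g (cylL (a : List ℕ+))
        ≤ ∑' a : Smax, μ (cylL (a : List ℕ+)) :=
          ENNReal.tsum_le_tsum fun a => a.2.1.1.2.2
      _ = μ (⋃ a ∈ Smax, cylL a) :=
          (measure_biUnion (Set.to_countable Smax) hdisj fun a _ => cylL_measurable a).symm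
      _ ≤ μ V := measure_mono (Set.iUnion₂_subset fun a ha => ha.1.1.1)
  have htne : ENNReal.ofReal t ≠ 0 := by simp [ENNReal.ofReal_pos.mpr ht, ne_of_gt]
  calc Hpre g ε₁ F ≤ ∑' k, gaugeOf g (Cc k) := Hpre_le_cover g ε₁ hcov hdiam
    _ = ∑' a : Smax, gaugeOf g (cylL a) := hsum
    _ ≤ (ENNReal.ofReal t)⁻¹ * μ V := by
        rw [← ENNReal.mul_le_iff_le_inv htne ENNReal.ofReal_ne_top]
        exact hkey
/-- Lower bound: if the upper density is at most `T` on `E`, then `μ E ≤ T · H_g E`. -/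
lemma mu_le_of_density_le (g : ℝ → ℝ) (r0 : ℝ) (hr0 : 0 < r0)
    (hg_pos : ∀ r ∈ Set.Ioo 0 r0, 0 < g r)
    (hg_rc : ∀ r ∈ Set.Ioo 0 r0, ContinuousWithinAt g (Set.Ici r) r)
    (hg_lim : Filter.Tendsto g (nhdsWithin 0 (Set.Ioi 0)) (nhds 0))
    (μ : Measure pU) (T : ℝ) (hT : 0 < T) (E : Set pU)
    (hden : ∀ u ∈ E, Filter.limsup (fun r : ℝ => μ (dball u r) / ENNReal.ofReal (g r))
        (nhdsWithin 0 (Set.Ioi 0)) ≤ ENNReal.ofReal T) :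
    μ E ≤ ENNReal.ofReal T * Hmeas g E := by
  have key : ∀ T' : ℝ, T < T' → μ E ≤ ENNReal.ofReal T' * Hmeas g E := by
    intro T' hTT'
    have hT' : 0 < T' := hT.trans hTT'
    have htne : ENNReal.ofReal T' ≠ 0 := by simp [ENNReal.ofReal_pos.mpr hT', ne_of_gt]
    set Em : ℕ → Set pU := fun m => {u ∈ E | ∀ r : ℝ, 0 < r → r < min (1/(m+1:ℝ)) r0 →
      μ (dball u r) ≤ ENNReal.ofReal T' * ENNReal.ofReal (g r)} with hEm
    have hEmmono : Monotone Em := by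
      intro m m' hmm' u hu
      refine ⟨hu.1, fun r hr hrlt => hu.2 r hr (lt_of_lt_of_le hrlt ?_)⟩
      have h1 : (1:ℝ)/(m'+1) ≤ 1/(m+1) := by
        apply one_div_le_one_div_of_le (by positivity)
        have : (m:ℝ) ≤ m' := Nat.cast_le.mpr hmm'
        linarith
      exact min_le_min h1 le_rfl
    have hEUnion : E = ⋃ m, Em m := by
      apply Set.Subset.antisymm
      · intro u hu
        have hlt : Filter.limsup (fun r : ℝ => μ (dball u r) / ENNReal.ofReal (g r))
            (nhdsWithin 0 (Set.Ioi 0)) < ENNReal.ofReal T' :=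
          lt_of_le_of_lt (hden u hu) (by
            rw [ENNReal.ofReal_lt_ofReal_iff hT']; exact hTT')
        have hev := Filter.eventually_lt_of_limsup_lt hlt (by isBoundedDefault)
        rw [Filter.eventually_iff_exists_mem] at hev
        obtain ⟨s, hs, hsP⟩ := hev
        rw [mem_nhdsGT_iff_exists_Ioo_subset] at hs
        obtain ⟨c, hc, hcs⟩ := hs
        have hcpos : 0 < c := by simpa using hc
        obtain ⟨m, hm⟩ := exists_nat_gt (1/c)
        refine Set.mem_iUnion.mpr ⟨m, hu, fun r hr hrlt => ?_⟩
        have hrc : r < c := by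
          have h1 : (1:ℝ)/(m+1) < c := by
            rw [div_lt_iff₀ (by positivity)]
            rw [div_lt_iff₀ hcpos] at hm
            nlinarith
          exact lt_of_lt_of_le hrlt ((min_le_left _ _).trans h1.le)
        have hgr : 0 < g r := hg_pos r ⟨hr, lt_of_lt_of_le hrlt (min_le_right _ _)⟩
        have hP := hsP r (hcs ⟨hr, hrc⟩)
        have := (ENNReal.div_lt_iff (Or.inl (by simp [ENNReal.ofReal_pos.mpr hgr, ne_of_gt]))
          (Or.inl ENNReal.ofReal_ne_top)).mp hP
        exact this.le
      · exact Set.iUnion_subset fun m => Set.sep_subset _ _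
    have hEmbound : ∀ m, μ (Em m) ≤ ENNReal.ofReal T' * Hmeas g E := by
      intro m
      set εm : ℝ := min (1/(m+1:ℝ)) r0 / 2 with hεm
      have hεmpos : 0 < εm := by positivity
      have hεmlt : εm < min (1/(m+1:ℝ)) r0 := by
        have : 0 < min (1/(m+1:ℝ)) r0 := lt_min (by positivity) hr0
        linarith
      have hεmr0 : εm < r0 := lt_of_lt_of_le hεmlt (min_le_right _ _)
      have hcover : ∀ (C : ℕ → Set pU), E ⊆ ⋃ k, C k →
          (∀ k, ediam (C k) ≤ ENNReal.ofReal εm) →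
          μ (Em m) ≤ ENNReal.ofReal T' * ∑' k, gaugeOf g (C k) := by
        intro C hcov hdiam
        have hclaim : ∀ k, μ (C k ∩ Em m) ≤ ENNReal.ofReal T' * gaugeOf g (C k) := by
          intro k
          rcases Set.eq_empty_or_nonempty (C k ∩ Em m) with hemp | ⟨u, huC, huE⟩
          · simp [hemp]
          by_cases hd : ediam (C k) = 0
          · -- C k is a single point of measure zero
            have hsingle : C k ∩ Em m ⊆ {u} := by
              intro v hv
              exact (subsingleton_of_ediam_eq_zero hd hv.1 huC)
            have hzero : μ {u} = 0 := by
              have hbound : ∀ r ∈ Set.Ioo (0:ℝ) (min (1/(m+1:ℝ)) r0),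
                  μ {u} ≤ ENNReal.ofReal T' * ENNReal.ofReal (g r) := by
                intro r hr
                refine le_trans (measure_mono ?_) (huE.2 r hr.1 hr.2)
                intro v hv
                simp only [Set.mem_singleton_iff] at hv
                subst hv
                simpa [dball, delta_self] using hr.1
              have htend : Filter.Tendsto (fun r : ℝ => ENNReal.ofReal T' * ENNReal.ofReal (g r))
                  (nhdsWithin 0 (Set.Ioi 0)) (nhds (ENNReal.ofReal T' * 0)) := by
                apply ENNReal.Tendsto.const_mul
                · have := (ENNReal.continuous_ofReal.tendsto 0).comp hg_lim
                  simpa [Function.comp_def] using this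
                · exact Or.inr ENNReal.ofReal_ne_top
              have hev : ∀ᶠ r in nhdsWithin (0:ℝ) (Set.Ioi 0),
                  μ {u} ≤ ENNReal.ofReal T' * ENNReal.ofReal (g r) := by
                filter_upwards [Ioo_mem_nhdsGT_of_mem
                  (Set.mem_Ico.mpr ⟨le_rfl, lt_min (show (0:ℝ) < 1/(m+1:ℝ) by positivity) hr0⟩)]
                  with r hr
                exact hbound r hr
              have := ge_of_tendsto htend hev
              simpa using this
            calc μ (C k ∩ Em m) ≤ μ {u} := measure_mono hsingle
            _ = 0 := hzero
            _ ≤ _ := zero_le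
          · -- positive diameter
            have hdne : ediam (C k) ≠ ⊤ :=
              ne_top_of_le_ne_top ENNReal.ofReal_ne_top (hdiam k)
            set D : ℝ := (ediam (C k)).toReal with hD
            have hD0 : 0 < D := ENNReal.toReal_pos hd hdne
            have hDle : D ≤ εm := by
              rw [hD]
              exact ENNReal.toReal_le_of_le_ofReal hεmpos.le (hdiam k)
            have hDr0 : D < r0 := lt_of_le_of_lt hDle hεmr0
            have hDlt : D < min (1/(m+1:ℝ)) r0 := lt_of_le_of_lt hDle hεmlt
            have hbound : ∀ r ∈ Set.Ioo D (min (1/(m+1:ℝ)) r0),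
                μ (C k) ≤ ENNReal.ofReal T' * ENNReal.ofReal (g r) := by
              intro r hr
              have hsub : C k ⊆ dball u r := by
                intro v hv
                have : delta u v ≤ D := delta_le_of_ediam_le hD0.le huC hv
                  (by rw [hD, ENNReal.ofReal_toReal hdne])
                exact lt_of_le_of_lt this hr.1
              exact le_trans (measure_mono hsub) (huE.2 r (hD0.trans hr.1) hr.2)
            have htend : Filter.Tendsto (fun r : ℝ => ENNReal.ofReal T' * ENNReal.ofReal (g r))
                (nhdsWithin D (Set.Ioi D)) (nhds (ENNReal.ofReal T' * ENNReal.ofReal (g D))) := by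
              apply ENNReal.Tendsto.const_mul
              · apply (ENNReal.continuous_ofReal.tendsto (g D)).comp
                apply (hg_rc D ⟨hD0, hDr0⟩).tendsto.mono_left
                exact nhdsWithin_mono D Set.Ioi_subset_Ici_self
              · exact Or.inr ENNReal.ofReal_ne_top
            have hev : ∀ᶠ r in nhdsWithin D (Set.Ioi D),
                μ (C k) ≤ ENNReal.ofReal T' * ENNReal.ofReal (g r) := by
              filter_upwards [Ioo_mem_nhdsGT_of_mem (Set.mem_Ico.mpr ⟨le_rfl, hDlt⟩)] with r hr
              exact hbound r hr
            have hfin := ge_of_tendsto htend hev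
            have hgauge : gaugeOf g (C k) = ENNReal.ofReal (g D) := by
              rw [gaugeOf, if_neg hd]
            calc μ (C k ∩ Em m) ≤ μ (C k) := measure_mono Set.inter_subset_left
            _ ≤ ENNReal.ofReal T' * ENNReal.ofReal (g D) := hfin
            _ = ENNReal.ofReal T' * gaugeOf g (C k) := by rw [hgauge]
        calc μ (Em m) ≤ μ (⋃ k, C k ∩ Em m) := by
              apply measure_mono
              intro u hu
              obtain ⟨s, ⟨k, rfl⟩, hks⟩ := hcov hu.1
              exact Set.mem_iUnion.mpr ⟨k, hks, hu⟩
        _ ≤ ∑' k, μ (C k ∩ Em m) := measure_iUnion_le _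
        _ ≤ ∑' k, ENNReal.ofReal T' * gaugeOf g (C k) := ENNReal.tsum_le_tsum hclaim
        _ = ENNReal.ofReal T' * ∑' k, gaugeOf g (C k) := ENNReal.tsum_mul_left
      have hHpre : (ENNReal.ofReal T')⁻¹ * μ (Em m) ≤ Hpre g εm E := by
        refine le_iInf fun C => le_iInf fun hcov => le_iInf fun hdiam => ?_
        calc (ENNReal.ofReal T')⁻¹ * μ (Em m)
            ≤ (ENNReal.ofReal T')⁻¹ * (ENNReal.ofReal T' * ∑' k, gaugeOf g (C k)) :=
              mul_le_mul_right (hcover C hcov hdiam) _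
        _ = ∑' k, gaugeOf g (C k) := by
              rw [← mul_assoc, ENNReal.inv_mul_cancel htne ENNReal.ofReal_ne_top, one_mul]
      have := hHpre.trans (Hpre_le_Hmeas g hεmpos E)
      calc μ (Em m) = ENNReal.ofReal T' * ((ENNReal.ofReal T')⁻¹ * μ (Em m)) := by
            rw [← mul_assoc, ENNReal.mul_inv_cancel htne ENNReal.ofReal_ne_top, one_mul]
      _ ≤ ENNReal.ofReal T' * Hmeas g E := mul_le_mul_right this _
    calc μ E = μ (⋃ m, Em m) := by rw [← hEUnion]
    _ = ⨆ m, μ (Em m) := hEmmono.measure_iUnion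
    _ ≤ ENNReal.ofReal T' * Hmeas g E := iSup_le hEmbound
  by_cases hH : Hmeas g E = ⊤
  · rw [hH, ENNReal.mul_top (by simp [ENNReal.ofReal_pos.mpr hT, ne_of_gt])]
    exact le_top
  · have htend : Filter.Tendsto (fun n : ℕ => ENNReal.ofReal (T + 1/(n+1)) * Hmeas g E)
        atTop (nhds (ENNReal.ofReal T * Hmeas g E)) := by
      apply ENNReal.Tendsto.mul_const
      · apply (ENNReal.continuous_ofReal.tendsto T).comp
        have h1 : Filter.Tendsto (fun n : ℕ => T + 1/(n+1 : ℝ)) atTop (nhds (T + 0)) :=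
          tendsto_const_nhds.add tendsto_one_div_add_atTop_nhds_zero_nat
        simpa using h1
      · exact Or.inr hH
    apply ge_of_tendsto htend
    filter_upwards with n
    refine key (T + 1/(n+1)) ?_
    have h : (0:ℝ) < 1/(n+1:ℝ) := by positivity
    linarith
/-- A set is "open" if every point has a whole cylinder around it inside the set. -/
def opn (U : Set pU) : Prop := ∀ u ∈ U, ∃ n : ℕ, cylL (pre u n) ⊆ U

lemma opn_empty : opn (∅ : Set pU) := fun _ hu => absurd hu (Set.notMem_empty _)

lemma opn_univ : opn (Set.univ : Set pU) := fun _ _ => ⟨0, fun _ _ => trivial⟩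

lemma opn_iUnion {ι : Sort*} {s : ι → Set pU} (h : ∀ i, opn (s i)) : opn (⋃ i, s i) := by
  intro u hu
  obtain ⟨t, ⟨i, rfl⟩, hi⟩ := hu
  obtain ⟨n, hn⟩ := h i u hi
  exact ⟨n, hn.trans (Set.subset_iUnion s i)⟩

lemma opn_inter {U V : Set pU} (hU : opn U) (hV : opn V) : opn (U ∩ V) := by
  intro u hu
  obtain ⟨n₁, hn₁⟩ := hU u hu.1
  obtain ⟨n₂, hn₂⟩ := hV u hu.2
  refine ⟨max n₁ n₂, fun v hv => ?_⟩
  exact ⟨hn₁ (cylL_mono (pre_prefix u (le_max_left _ _)) hv),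
    hn₂ (cylL_mono (pre_prefix u (le_max_right _ _)) hv)⟩

lemma opn_measurable {U : Set pU} (hU : opn U) : MeasurableSet U := by
  have : U = ⋃ a ∈ {a : List ℕ+ | cylL a ⊆ U}, cylL a := by
    apply Set.Subset.antisymm
    · intro u hu
      obtain ⟨n, hn⟩ := hU u hu
      exact Set.mem_biUnion hn (self_mem_cylL_pre u n)
    · exact Set.iUnion₂_subset fun a ha => ha
  rw [this]
  exact MeasurableSet.biUnion (Set.to_countable _) fun a _ => cylL_measurable a

lemma opn_of_mem_cylinders {t : Set pU}
    (ht : t ∈ MeasureTheory.measurableCylinders (fun _ : ℕ => ℕ+)) : opn t := by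
  rw [MeasureTheory.mem_measurableCylinders] at ht
  obtain ⟨s, S, _, rfl⟩ := ht
  intro u hu
  refine ⟨(s.sup id) + 1, fun v hv => ?_⟩
  have : s.restrict v = s.restrict u := by
    funext i
    have hi : (i : ℕ) < s.sup id + 1 := Nat.lt_succ_of_le (Finset.le_sup (f := id) i.2)
    exact (mem_cylL_pre.mp hv i hi).symm
  simpa only [MeasureTheory.mem_cylinder, this] using hu

open MeasureTheory in
/-- Outer regularity of a finite measure with respect to "open" sets. -/
lemma outer_reg (μ : Measure pU) [IsFiniteMeasure μ] {A : Set pU} (hA : MeasurableSet A)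
    {ε : ENNReal} (hε : ε ≠ 0) : ∃ U, opn U ∧ A ⊆ U ∧ μ U ≤ μ A + ε := by
  set P : Set pU → Prop := fun t => ∀ ε : ENNReal, ε ≠ 0 →
    (∃ U, opn U ∧ t ⊆ U ∧ μ U ≤ μ t + ε) ∧ (∃ U, opn U ∧ tᶜ ⊆ U ∧ μ U ≤ μ tᶜ + ε) with hP
  have main : ∀ ⦃t : Set pU⦄, MeasurableSet t → P t := by
    refine MeasurableSpace.induction_on_inter
      (m := (inferInstance : MeasurableSpace pU))
      (s := measurableCylinders (fun _ : ℕ => ℕ+))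
      generateFrom_measurableCylinders.symm isPiSystem_measurableCylinders ?_ ?_ ?_ ?_
    · -- empty set
      intro ε hε
      refine ⟨⟨∅, opn_empty, le_rfl, le_self_add⟩, ⟨Set.univ, opn_univ, Set.subset_univ _, ?_⟩⟩
      rw [Set.compl_empty]
      exact le_self_add
    · -- basic cylinders
      intro t ht ε hε
      exact ⟨⟨t, opn_of_mem_cylinders ht, le_rfl, le_self_add⟩,
        ⟨tᶜ, opn_of_mem_cylinders (compl_mem_measurableCylinders ht), le_rfl, le_self_add⟩⟩
    · -- complement
      intro t _ hPt ε hε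
      obtain ⟨h1, h2⟩ := hPt ε hε
      rw [compl_compl] at *
      exact ⟨h2, by simpa [compl_compl] using h1⟩
    · -- disjoint countable union
      intro f hdisj hmeas hPf ε hε
      rcases eq_or_ne ε ⊤ with rfl | hεtop
      · constructor
        · exact ⟨Set.univ, opn_univ, Set.subset_univ _, by simp⟩
        · exact ⟨Set.univ, opn_univ, Set.subset_univ _, by simp⟩
      have hε2 : (ε / 2) ≠ 0 := by
        simp [ENNReal.div_eq_zero_iff, hε]
      obtain ⟨δ, hδpos, hδsum⟩ := ENNReal.exists_pos_sum_of_countable hε2 ℕ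
      have hδne : ∀ n, ((δ n : ENNReal)) ≠ 0 := fun n => by
        simpa using (hδpos n).ne'
      constructor
      · -- outer approximation of the union
        choose U hUopn hUsub hUle using fun n => (hPf n (δ n) (hδne n)).1
        refine ⟨⋃ n, U n, opn_iUnion hUopn, Set.iUnion_mono hUsub, ?_⟩
        calc μ (⋃ n, U n) ≤ ∑' n, μ (U n) := measure_iUnion_le _
        _ ≤ ∑' n, (μ (f n) + δ n) := ENNReal.tsum_le_tsum hUle
        _ = ∑' n, μ (f n) + ∑' n, (δ n : ENNReal) := ENNReal.tsum_add
        _ ≤ μ (⋃ n, f n) + ε := by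
            rw [measure_iUnion hdisj hmeas]
            exact add_le_add le_rfl (hδsum.le.trans (ENNReal.half_le_self))
      · -- outer approximation of the complement
        choose V hVopn hVsub hVle using fun n => (hPf n (δ n) (hδne n)).2
        have hVmeas : ∀ n, MeasurableSet (V n) := fun n => opn_measurable (hVopn n)
        set W : ℕ → Set pU := fun N => ⋂ n ∈ Finset.range (N+1), V n with hW
        have hWopn : ∀ N, opn (W N) := by
          intro N
          induction N with
          | zero => simpa [hW] using hVopn 0
          | succ N ih =>
            have : W (N+1) = W N ∩ V (N+1) := by
              ext x
              simp only [hW, Set.mem_iInter, Finset.mem_range, Set.mem_inter_iff]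
              constructor
              · intro h
                exact ⟨fun n hn => h n (by omega), h (N+1) (by omega)⟩
              · rintro ⟨h1, h2⟩ n hn
                by_cases hne : n = N + 1
                · subst hne; exact h2
                · exact h1 n (by omega)
            rw [this]
            exact opn_inter ih (hVopn (N+1))
        have hWanti : Antitone W := by
          intro a b hab x hx
          simp only [hW, Set.mem_iInter, Finset.mem_range] at *
          intro n hn
          exact hx n (by omega)
        have hiVsub : μ (⋂ n, V n) ≤ μ (⋃ n, f n)ᶜ + ε / 2 := by
          have hsub : (⋂ n, V n) ⊆ (⋃ n, f n)ᶜ ∪ ⋃ n, (V n \ (f n)ᶜ) := by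
            intro x hx
            by_cases hxc : x ∈ (⋃ n, f n)ᶜ
            · exact Or.inl hxc
            · simp only [Set.mem_compl_iff, not_not] at hxc
              obtain ⟨s, ⟨n, rfl⟩, hn⟩ := hxc
              exact Or.inr (Set.mem_iUnion.mpr ⟨n, Set.mem_iInter.mp hx n, by simp [hn]⟩)
          have hdiff : ∀ n, μ (V n \ (f n)ᶜ) ≤ δ n := by
            intro n
            rw [measure_diff (hVsub n) (hmeas n).compl.nullMeasurableSet (measure_ne_top μ _)]
            exact tsub_le_iff_left.mpr (hVle n)
          calc μ (⋂ n, V n) ≤ μ ((⋃ n, f n)ᶜ) + μ (⋃ n, (V n \ (f n)ᶜ)) :=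
              le_trans (measure_mono hsub) (measure_union_le _ _)
          _ ≤ μ ((⋃ n, f n)ᶜ) + ∑' n, μ (V n \ (f n)ᶜ) :=
              add_le_add le_rfl (measure_iUnion_le _)
          _ ≤ μ ((⋃ n, f n)ᶜ) + ε / 2 :=
              add_le_add le_rfl ((ENNReal.tsum_le_tsum hdiff).trans hδsum.le)
        have htend : Filter.Tendsto (fun N => μ (W N)) Filter.atTop (nhds (μ (⋂ N, W N))) := by
          apply MeasureTheory.tendsto_measure_iInter_atTop
            (fun N => (opn_measurable (hWopn N)).nullMeasurableSet) hWanti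
          exact ⟨0, measure_ne_top μ _⟩
        have hWV : (⋂ N, W N) = ⋂ n, V n := by
          apply Set.Subset.antisymm
          · intro x hx
            apply Set.mem_iInter.mpr fun n => ?_
            have := Set.mem_iInter.mp hx n
            exact Set.mem_iInter₂.mp this n (by simp [Finset.mem_range])
          · intro x hx
            exact Set.mem_iInter.mpr fun N => Set.mem_iInter₂.mpr fun n _ =>
              Set.mem_iInter.mp hx n
        have hlim : μ (⋂ N, W N) < μ (⋂ N, W N) + ε / 2 :=
          ENNReal.lt_add_right (measure_ne_top μ _) hε2
        obtain ⟨N, hN⟩ := (htend.eventually_lt_const hlim).exists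
        refine ⟨W N, hWopn N, ?_, ?_⟩
        · intro x hx
          refine Set.mem_iInter₂.mpr fun n _ => hVsub n ?_
          intro hm
          exact hx (Set.mem_iUnion.mpr ⟨n, hm⟩)
        · calc μ (W N) ≤ μ (⋂ M, W M) + ε/2 := hN.le
          _ = μ (⋂ n, V n) + ε/2 := by rw [hWV]
          _ ≤ (μ ((⋃ n, f n)ᶜ) + ε/2) + ε/2 := add_le_add hiVsub le_rfl
          _ ≤ μ ((⋃ n, f n)ᶜ) + ε := by
              rw [add_assoc, ENNReal.add_halves]
  exact (main hA ε hε).1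

open MeasureTheory in
/-- If the upper density limsup μ(B(u,r))/g(r) equals κ for μ-a.e. u and the
set where it is at most κ₀ < κ is H_g-null, then H_g(· ∩ supp μ) = κ⁻¹ μ. -/
theorem Hmeas_eq_density
    (r0 C : ℝ) (hr0 : 0 < r0) (hC : 1 < C) (g : ℝ → ℝ)
    (hg_pos : ∀ r ∈ Set.Ioo 0 r0, 0 < g r)
    (hg_mono : MonotoneOn g (Set.Ioo 0 r0))
    (hg_rc : ∀ r ∈ Set.Ioo 0 r0, ContinuousWithinAt g (Set.Ici r) r)
    (hg_lim : Filter.Tendsto g (nhdsWithin 0 (Set.Ioi 0)) (nhds 0))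
    (hg_dbl : ∀ r : ℝ, 0 < r → r < r0 / 2 → g (2 * r) ≤ C * g r)
    (μ : Measure pU) [IsFiniteMeasure μ]
    (κ κ0 : ℝ) (hκ : 0 < κ) (hκ0 : 0 < κ0) (hκκ0 : κ0 < κ)
    (hae : ∀ᵐ u ∂μ, Filter.limsup (fun r : ℝ => μ (dball u r) / ENNReal.ofReal (g r))
        (nhdsWithin 0 (Set.Ioi 0)) = ENNReal.ofReal κ)
    (hnull : Hmeas g {u : pU |
      Filter.limsup (fun r : ℝ => μ (dball u r) / ENNReal.ofReal (g r))
        (nhdsWithin 0 (Set.Ioi 0)) ≤ ENNReal.ofReal κ0} = 0) :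
    ∀ A : Set pU, MeasurableSet A →
      Hmeas g (A ∩ msupport μ) = (ENNReal.ofReal κ)⁻¹ * μ A := by
  intro A hA
  set L : pU → ENNReal := fun u =>
    Filter.limsup (fun r : ℝ => μ (dball u r) / ENNReal.ofReal (g r))
      (nhdsWithin 0 (Set.Ioi 0)) with hL
  have hκne : ENNReal.ofReal κ ≠ 0 := by simp [ENNReal.ofReal_pos.mpr hκ, ne_of_gt]
  have hκ0ne : ENNReal.ofReal κ0 ≠ 0 := by simp [ENNReal.ofReal_pos.mpr hκ0, ne_of_gt]
  set G : Set pU := {u | L u = ENNReal.ofReal κ} with hG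
  have hGc : μ Gᶜ = 0 := by
    have := hae
    rw [MeasureTheory.ae_iff] at this
    exact this
  have hGsupp : G ⊆ msupport μ := by
    intro u hu r hr
    have hlim : (0 : ENNReal) < L u := by
      rw [hu]
      exact ENNReal.ofReal_pos.mpr hκ
    have hfreq := Filter.frequently_lt_of_lt_limsup (by isBoundedDefault) hlim
    obtain ⟨r', hr'mem, hr'P⟩ := Filter.frequently_iff.mp hfreq
      (Ioo_mem_nhdsGT_of_mem (Set.mem_Ico.mpr ⟨le_rfl, hr⟩))
    have hballpos : 0 < μ (dball u r') := by
      by_contra hz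
      push_neg at hz
      have : μ (dball u r') = 0 := le_antisymm hz zero_le
      rw [this, ENNReal.zero_div] at hr'P
      exact lt_irrefl _ hr'P
    refine lt_of_lt_of_le hballpos (measure_mono fun v hv => ?_)
    exact lt_trans hv hr'mem.2
  -- lower bound
  have hAG : μ (A ∩ G) = μ A := by
    apply le_antisymm (measure_mono Set.inter_subset_left)
    calc μ A ≤ μ ((A ∩ G) ∪ Gᶜ) := measure_mono (by
          intro x hx
          by_cases hxG : x ∈ G
          · exact Or.inl ⟨hx, hxG⟩
          · exact Or.inr hxG)
    _ ≤ μ (A ∩ G) + μ Gᶜ := measure_union_le _ _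
    _ = μ (A ∩ G) := by rw [hGc, add_zero]
  have hlow : (ENNReal.ofReal κ)⁻¹ * μ A ≤ Hmeas g (A ∩ msupport μ) := by
    have h1 : μ (A ∩ G) ≤ ENNReal.ofReal κ * Hmeas g (A ∩ G) :=
      mu_le_of_density_le g r0 hr0 hg_pos hg_rc hg_lim μ κ hκ (A ∩ G)
        (fun u hu => le_of_eq hu.2)
    calc (ENNReal.ofReal κ)⁻¹ * μ A = (ENNReal.ofReal κ)⁻¹ * μ (A ∩ G) := by rw [hAG]
    _ ≤ (ENNReal.ofReal κ)⁻¹ * (ENNReal.ofReal κ * Hmeas g (A ∩ G)) :=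
        mul_le_mul_right h1 _
    _ = Hmeas g (A ∩ G) := by
        rw [← mul_assoc, ENNReal.inv_mul_cancel hκne ENNReal.ofReal_ne_top, one_mul]
    _ ≤ Hmeas g (A ∩ msupport μ) :=
        Hmeas_mono g (Set.inter_subset_inter le_rfl hGsupp)
  -- upper bound
  set B₁ : Set pU := {u : pU | L u ≤ ENNReal.ofReal κ0} with hB₁
  set B₂ : Set pU := Gᶜ ∩ {u : pU | ENNReal.ofReal κ0 < L u} with hB₂
  have hsplit : A ∩ msupport μ ⊆ (A ∩ G) ∪ (B₁ ∪ B₂) := by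
    intro x hx
    by_cases hxG : x ∈ G
    · exact Or.inl ⟨hx.1, hxG⟩
    · rcases le_or_gt (L x) (ENNReal.ofReal κ0) with h | h
      · exact Or.inr (Or.inl h)
      · exact Or.inr (Or.inr ⟨hxG, h⟩)
  have hHB₁ : Hmeas g B₁ = 0 := hnull
  have hHB₂ : Hmeas g B₂ = 0 := by
    obtain ⟨B, hBsub, hBmeas, hBnull⟩ := exists_measurable_superset_of_null hGc
    apply le_antisymm _ zero_le
    have key : ∀ η : NNReal, 0 < η → Hmeas g B₂ ≤ (η : ENNReal) := by
      intro η hη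
      have hεne : (ENNReal.ofReal κ0) * η ≠ 0 := by
        simp [hκ0ne, hη.ne']
      obtain ⟨U, hUopn, hUsub, hUle⟩ := outer_reg μ hBmeas hεne
      have hbound := Hmeas_le_of_density_gt g r0 hr0 hg_pos hg_mono μ κ0 hκ0 B₂ U
        (fun x hx => hUsub (hBsub hx.1)) (fun u hu => hUopn u hu)
        (fun u hu => hu.2)
      have hUle' : μ U ≤ ENNReal.ofReal κ0 * η := by
        rw [hBnull, zero_add] at hUle
        exact hUle
      calc Hmeas g B₂ ≤ (ENNReal.ofReal κ0)⁻¹ * μ U := hbound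
      _ ≤ (ENNReal.ofReal κ0)⁻¹ * (ENNReal.ofReal κ0 * η) := mul_le_mul_right hUle' _
      _ = η := by
          rw [← mul_assoc, ENNReal.inv_mul_cancel hκ0ne ENNReal.ofReal_ne_top, one_mul]
    refine ENNReal.le_of_forall_pos_le_add fun η hη _ => ?_
    rw [zero_add]
    exact key η hη
  have hAGup : ∀ t' ∈ Set.Ioo (0:ℝ) κ,
      Hmeas g (A ∩ G) ≤ (ENNReal.ofReal t')⁻¹ * μ A := by
    intro t' ht'
    have ht'ne : ENNReal.ofReal t' ≠ 0 := by simp [ENNReal.ofReal_pos.mpr ht'.1, ne_of_gt]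
    have step : ∀ η : ENNReal, η ≠ 0 →
        Hmeas g (A ∩ G) ≤ (ENNReal.ofReal t')⁻¹ * (μ A + η) := by
      intro η hη
      obtain ⟨U, hUopn, hUsub, hUle⟩ := outer_reg μ hA hη
      have hbound := Hmeas_le_of_density_gt g r0 hr0 hg_pos hg_mono μ t' ht'.1 (A ∩ G) U
        (fun x hx => hUsub hx.1) (fun u hu => hUopn u hu)
        (fun u hu => by
          have h2 : L u = ENNReal.ofReal κ := hu.2
          calc ENNReal.ofReal t' < ENNReal.ofReal κ :=
                (ENNReal.ofReal_lt_ofReal_iff hκ).mpr ht'.2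
          _ = L u := h2.symm)
      exact hbound.trans (mul_le_mul_right hUle _)
    refine ENNReal.le_of_forall_pos_le_add fun η hη _ => ?_
    have h1 := step (ENNReal.ofReal t' * η) (by simp [ht'ne, hη.ne'])
    calc Hmeas g (A ∩ G)
        ≤ (ENNReal.ofReal t')⁻¹ * (μ A + ENNReal.ofReal t' * η) := h1
    _ = (ENNReal.ofReal t')⁻¹ * μ A + (ENNReal.ofReal t')⁻¹ * (ENNReal.ofReal t' * η) := by
        rw [mul_add]
    _ = (ENNReal.ofReal t')⁻¹ * μ A + η := by
        rw [← mul_assoc, ENNReal.inv_mul_cancel ht'ne ENNReal.ofReal_ne_top, one_mul]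
  have hAGfinal : Hmeas g (A ∩ G) ≤ (ENNReal.ofReal κ)⁻¹ * μ A := by
    set t : ℕ → ℝ := fun n => κ - (κ/2) * (1/(n+1)) with ht
    have htmem : ∀ n, t n ∈ Set.Ioo (0:ℝ) κ := by
      intro n
      have h1 : (0:ℝ) < 1/(n+1:ℝ) := by positivity
      have h2 : (1:ℝ)/(n+1:ℝ) ≤ 1 := by
        rw [div_le_one (by positivity)]
        simp
      constructor
      · simp only [ht]; nlinarith
      · simp only [ht]; nlinarith
    have htend : Filter.Tendsto (fun n => (ENNReal.ofReal (t n))⁻¹ * μ A)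
        Filter.atTop (nhds ((ENNReal.ofReal κ)⁻¹ * μ A)) := by
      have h0 : Filter.Tendsto (fun n : ℕ => t n) Filter.atTop (nhds κ) := by
        have := tendsto_one_div_add_atTop_nhds_zero_nat (𝕜 := ℝ)
        have h2 : Filter.Tendsto (fun n : ℕ => κ - (κ/2) * (1/(n+1:ℝ)))
            Filter.atTop (nhds (κ - (κ/2) * 0)) :=
          Filter.Tendsto.sub tendsto_const_nhds (Filter.Tendsto.const_mul _ this)
        rw [ht]
        simpa using h2
      have hinv : Filter.Tendsto (fun n => (t n)⁻¹) Filter.atTop (nhds κ⁻¹) :=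
        (continuousAt_inv₀ hκ.ne').tendsto.comp h0
      have hofReal : Filter.Tendsto (fun n => ENNReal.ofReal ((t n)⁻¹))
          Filter.atTop (nhds (ENNReal.ofReal κ⁻¹)) :=
        (ENNReal.continuous_ofReal.tendsto _).comp hinv
      have heq : ∀ n, ENNReal.ofReal ((t n)⁻¹) = (ENNReal.ofReal (t n))⁻¹ :=
        fun n => ENNReal.ofReal_inv_of_pos (htmem n).1
      have heq' : ENNReal.ofReal κ⁻¹ = (ENNReal.ofReal κ)⁻¹ :=
        ENNReal.ofReal_inv_of_pos hκ
      rw [heq'] at hofReal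
      have : Filter.Tendsto (fun n => (ENNReal.ofReal (t n))⁻¹)
          Filter.atTop (nhds ((ENNReal.ofReal κ)⁻¹)) := by
        refine hofReal.congr fun n => heq n
      exact ENNReal.Tendsto.mul_const this (Or.inr (measure_ne_top μ A))
    exact ge_of_tendsto htend (Filter.Eventually.of_forall fun n => hAGup (t n) (htmem n))
  have hup : Hmeas g (A ∩ msupport μ) ≤ (ENNReal.ofReal κ)⁻¹ * μ A := by
    calc Hmeas g (A ∩ msupport μ) ≤ Hmeas g ((A ∩ G) ∪ (B₁ ∪ B₂)) := Hmeas_mono g hsplit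
    _ ≤ Hmeas g (A ∩ G) + Hmeas g (B₁ ∪ B₂) := Hmeas_union_le g _ _
    _ ≤ Hmeas g (A ∩ G) + (Hmeas g B₁ + Hmeas g B₂) :=
        add_le_add le_rfl (Hmeas_union_le g _ _)
    _ = Hmeas g (A ∩ G) := by rw [hHB₁, hHB₂, add_zero, add_zero]
    _ ≤ (ENNReal.ofReal κ)⁻¹ * μ A := hAGfinal
  exact le_antisymm hup hlow
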